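/- Let R : X×X → I be a compact association scheme. If R is commutative then the Bose–Mesner algebra 𝔄_R is commutative (A ∘ B = B ∘ A for all A, B ∈ 𝔄_R), and if R is symmetric then 𝔄_R is symmetric (A^⊤ = A for all A ∈ 𝔄_R). -/
import Mathlib


open MeasureTheory Topology Filter

noncomputable section

variable {X : Type*} {I : Type*}

/-- The matrix product `(A ∘ B)(x,z) = ∫ A(x,y) B(y,z) dμ(y)`. -/
def matProd [MeasurableSpace X] (μ : Measure X) (A B : X × X → ℂ) :
    X × X → ℂ :=
  fun p => ∫ y, A (p.1, y) * B (y, p.2) ∂μ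

/-- A compact association scheme: a quotient map `R : X × X → I` onto a compact
Hausdorff space satisfying (CAS1), (CAS2) and (CAS3). -/
def IsCompactAS [TopologicalSpace X] [TopologicalSpace I] [MeasurableSpace X]
    (μ : Measure X) (R : X × X → I) : Prop :=
  CompactSpace I ∧ T2Space I ∧ Topology.IsQuotientMap R ∧
    (∃ i₀ : I, R ⁻¹' {i₀} = {p : X × X | p.1 = p.2}) ∧
    (∀ W W' : Set I, MeasurableSet[borel I] W → MeasurableSet[borel I] W' →
      ∀ k : I, ∃ p : NNReal, ∀ x z : X, R (x, z) = k →
        μ {y : X | R (x, y) ∈ W ∧ R (y, z) ∈ W'} = (p : ENNReal)) ∧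
    (∀ i : I, ∃ iT : I, R ⁻¹' {iT} = Prod.swap ⁻¹' (R ⁻¹' {i}))

/-- Commutativity of a compact association scheme:
`p_{W,W'}^k = p_{W',W}^k` for all Borel `W, W'` and all `k`. -/
def CASComm [TopologicalSpace I] [MeasurableSpace X]
    (μ : Measure X) (R : X × X → I) : Prop :=
  ∀ W W' : Set I, MeasurableSet[borel I] W → MeasurableSet[borel I] W' →
    ∀ x z x' z' : X, R (x, z) = R (x', z') →
      μ {y : X | R (x, y) ∈ W ∧ R (y, z) ∈ W'} =
        μ {y : X | R (x', y) ∈ W' ∧ R (y, z') ∈ W}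

/-- Symmetry of a compact association scheme: `i⊤ = i` for all `i`,
i.e. every fiber of `R` is invariant under `Prod.swap`. -/
def CASSymm (R : X × X → I) : Prop :=
  ∀ i : I, R ⁻¹' {i} = Prod.swap ⁻¹' (R ⁻¹' {i})

/-- The algebra `𝔄_R = {f ∘ R : f ∈ C(I, ℂ)}`. -/
def ARset [TopologicalSpace X] [TopologicalSpace I] (R : X × X → I) :
    Set C(X × X, ℂ) :=
  {F | ∃ f : C(I, ℂ), ∀ p : X × X, F p = f (R p)}

universe w

/-- `S` admits an approximate identity (a net) for the matrix product. -/
def HasApproxIdIn [TopologicalSpace X] [MeasurableSpace X] (μ : Measure X)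
    (S : Set C(X × X, ℂ)) : Prop :=
  ∃ (ι : Type w) (l : Filter ι), l.NeBot ∧ ∃ E : ι → C(X × X, ℂ),
    (∀ n, E n ∈ S) ∧ ∀ A : C(X × X, ℂ),
      TendstoUniformly (fun n => matProd μ ⇑(E n) ⇑A) ⇑A l ∧
      TendstoUniformly (fun n => matProd μ ⇑A ⇑(E n)) ⇑A l

/-- A Bose--Mesner algebra: a unital C*-subalgebra of `(C(X × X, ℂ), •, conj, ‖·‖∞)`
(i.e. a closed star-subalgebra for the pointwise (Hadamard) operations) satisfying
(BMA1a), (BMA1b), (BMA2), (BMA3). -/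
structure IsBMA [TopologicalSpace X] [MeasurableSpace X] (μ : Measure X)
    (S : Set C(X × X, ℂ)) : Prop where
  isSubalg : ∃ 𝔄 : StarSubalgebra ℂ C(X × X, ℂ), (𝔄 : Set C(X × X, ℂ)) = S
  isClosed : IsClosed S
  approxId : HasApproxIdIn.{w} μ S
  constJ : ∀ A ∈ S, ∃ c : ℂ, ∀ p : X × X, matProd μ ⇑A (fun _ => (1 : ℂ)) p = c
  mulClosed : ∀ A ∈ S, ∀ B ∈ S, ∃ C ∈ S, ∀ p : X × X, matProd μ ⇑A ⇑B p = C p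
  transpClosed : ∀ A ∈ S, ∃ B ∈ S, ∀ p : X × X, B p = A p.swap

/-- Commutativity of a Bose--Mesner algebra (for the matrix product). -/
def BMAComm [TopologicalSpace X] [MeasurableSpace X] (μ : Measure X)
    (S : Set C(X × X, ℂ)) : Prop :=
  ∀ A ∈ S, ∀ B ∈ S, matProd μ ⇑A ⇑B = matProd μ ⇑B ⇑A

/-- Symmetry of a Bose--Mesner algebra: `A⊤ = A` for all `A ∈ S`. -/
def BMASymm [TopologicalSpace X] (S : Set C(X × X, ℂ)) : Prop :=
  ∀ A ∈ S, ∀ p : X × X, A p.swap = A p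

theorem stmt3 [TopologicalSpace X] [CompactSpace X] [T2Space X] [Nonempty X]
    [MeasurableSpace X] [BorelSpace X]
    (μ : Measure X) [IsFiniteMeasure μ] [μ.Regular] [μ.IsOpenPosMeasure]
    [TopologicalSpace I]
    (R : X × X → I) (hR : IsCompactAS μ R) :
    (CASComm μ R → BMAComm μ (ARset R)) ∧
      (CASSymm R → BMASymm (ARset R)) := by
  obtain ⟨hI, hT2, hQ, -, -, -⟩ := hR
  letI : MeasurableSpace I := borel I
  haveI : BorelSpace I := ⟨rfl⟩
  have hRc : Continuous R := hQ.continuous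
  constructor
  · intro hcomm A hA B hB
    obtain ⟨f, hf⟩ := hA
    obtain ⟨g, hg⟩ := hB
    funext p
    obtain ⟨x, z⟩ := p
    set T1 : X → I × I := fun y => (R (x, y), R (y, z)) with hT1def
    set T2 : X → I × I := fun y => (R (y, z), R (x, y)) with hT2def
    have hm1 : Measurable fun y : X => R (x, y) :=
      (hRc.comp (Continuous.prodMk_right x)).measurable
    have hm2 : Measurable fun y : X => R (y, z) :=
      (hRc.comp (continuous_id.prodMk continuous_const)).measurable
    have hT1 : Measurable T1 := hm1.prodMk hm2
    have hT2 : Measurable T2 := hm2.prodMk hm1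
    have hmeq : μ.map T1 = μ.map T2 := by
      refine MeasureTheory.ext_of_generate_finite _ generateFrom_prod.symm isPiSystem_prod
        ?_ ?_
      · rintro s ⟨W, hW, W', hW', rfl⟩
        have hW1 : MeasurableSet W := hW
        have hW2 : MeasurableSet W' := hW'
        rw [Measure.map_apply hT1 (hW1.prod hW2),
          Measure.map_apply hT2 (hW1.prod hW2)]
        have h1 : T1 ⁻¹' (W ×ˢ W') = {y : X | R (x, y) ∈ W ∧ R (y, z) ∈ W'} := by
          ext y; simp [hT1def, Set.mem_prod]
        have h2 : T2 ⁻¹' (W ×ˢ W') = {y : X | R (x, y) ∈ W' ∧ R (y, z) ∈ W} := by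
          ext y; simp [hT2def, Set.mem_prod, and_comm]
        rw [h1, h2]
        exact hcomm W W' hW hW' x z x z rfl
      · rw [Measure.map_apply hT1 MeasurableSet.univ,
          Measure.map_apply hT2 MeasurableSet.univ]
        simp
    have hh : AEStronglyMeasurable (fun q : I × I => f q.1 * g q.2) (μ.map T1) :=
      ((f.continuous.measurable.comp measurable_fst).mul
        (g.continuous.measurable.comp measurable_snd)).aestronglyMeasurable
    have hh2 : AEStronglyMeasurable (fun q : I × I => f q.1 * g q.2) (μ.map T2) :=
      hmeq ▸ hh
    have key : (∫ y, f (R (x, y)) * g (R (y, z)) ∂μ)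
        = ∫ y, g (R (x, y)) * f (R (y, z)) ∂μ := by
      calc (∫ y, f (R (x, y)) * g (R (y, z)) ∂μ)
          = ∫ q : I × I, f q.1 * g q.2 ∂(μ.map T1) :=
            (integral_map hT1.aemeasurable hh).symm
        _ = ∫ q : I × I, f q.1 * g q.2 ∂(μ.map T2) := by rw [hmeq]
        _ = ∫ y, f (R (y, z)) * g (R (x, y)) ∂μ :=
            integral_map hT2.aemeasurable hh2
        _ = ∫ y, g (R (x, y)) * f (R (y, z)) ∂μ := by simp [mul_comm]
    simpa only [matProd, hf, hg] using key
  · intro hsymm A hA p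
    obtain ⟨f, hf⟩ := hA
    have hsw : R p.swap = R p := by
      have h := hsymm (R p)
      have hp : p ∈ R ⁻¹' {R p} := rfl
      rw [h] at hp
      exact hp
    rw [hf, hf, hsw]
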